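/- arXiv:1803.02672 — 4 statements merged into one kernel-verified Lean document; each statement's English description precedes it below -/
import Mathlib

section
/- Let p ∈ (1,∞). Define for z ∈ ℝ the quantities d₁(z) := (z−1)(z^{p−1}−1), d₂(z) := |z|^p − 1 − p(z−1), and d₃(z) := (z^{p/2} − 1)², where z^a denotes the signed power |z|^{a−1}z (with 0^a := 0). Then d₁, d₂, d₃ are nonnegative on ℝ and there exist constants 0 < c ≤ C, depending only on p, such that for all z ∈ ℝ: c·d₂(z) ≤ d₁(z) ≤ C·d₂(z) and c·d₃(z) ≤ d₁(z) ≤ C·d₃(z). -/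
open Real

set_option maxHeartbeats 1000000

/-- Signed power: `z ^ a := |z| ^ (a-1) * z`, with `0 ^ a = 0`. -/
noncomputable def sgnPow (a z : ℝ) : ℝ := |z| ^ (a - 1) * z

lemma sgnPow_nonneg' (a z : ℝ) (ha : a ≠ 0) (hz : 0 ≤ z) : sgnPow a z = z ^ a := by
  rcases eq_or_lt_of_le hz with h | h
  · simp [sgnPow, ← h, Real.zero_rpow ha]
  · unfold sgnPow
    rw [abs_of_pos h]
    have e := Real.rpow_add h (a-1) 1
    rw [sub_add_cancel, Real.rpow_one] at e
    rw [e]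

lemma sgnPow_neg' (a z : ℝ) (hz : z < 0) : sgnPow a z = -((-z) ^ a) := by
  unfold sgnPow
  rw [abs_of_neg hz]
  have h : (0:ℝ) < -z := by linarith
  have e := Real.rpow_add h (a-1) 1
  rw [sub_add_cancel, Real.rpow_one] at e
  rw [e]; ring

/-- Bernoulli-type: for `0 ≤ x`, `0 ≤ t ≤ 1`, `x ^ t ≤ 1 + t * (x - 1)`. -/
lemma rpow_le_one_add_mul (x t : ℝ) (hx : 0 ≤ x) (ht0 : 0 ≤ t) (ht1 : t ≤ 1) :
    x ^ t ≤ 1 + t * (x - 1) := by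
  have h := Real.geom_mean_le_arith_mean2_weighted ht0 (by linarith : (0:ℝ) ≤ 1 - t)
    hx zero_le_one (by ring)
  rw [Real.one_rpow] at h
  linarith

lemma two_mul_le_rpow_add (u α β : ℝ) (hu : 0 ≤ u) (hα : 0 < α) (hβ : 0 < β)
    (hs : α + β = 2) : 2 * u ≤ u ^ α + u ^ β := by
  have h := Real.geom_mean_le_arith_mean2_weighted (by norm_num : (0:ℝ) ≤ 1/2)
    (by norm_num : (0:ℝ) ≤ 1/2) (Real.rpow_nonneg hu α) (Real.rpow_nonneg hu β) (by norm_num)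
  have e : (u ^ α) ^ ((1:ℝ)/2) * (u ^ β) ^ ((1:ℝ)/2) = u := by
    rw [← Real.rpow_mul hu, ← Real.rpow_mul hu,
      ← Real.rpow_add' hu (by rw [show α * (1/2) + β * (1/2) = 1 by linarith]; norm_num)]
    rw [show α * (1/2) + β * (1/2) = 1 by linarith, Real.rpow_one]
  rw [e] at h
  linarith

/-- Key comparison: for `0 < β ≤ 1 ≤ α` with `α + β = 2` and `u ≥ 0`,
`β (u-1)² ≤ (u^α - 1)(u^β - 1) ≤ (u-1)²`. -/
lemma key_cmp (α β u : ℝ) (hβ0 : 0 < β) (hβ1 : β ≤ 1) (hα : 1 ≤ α) (hs : α + β = 2)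
    (hu : 0 ≤ u) :
    β * (u-1)^2 ≤ (u ^ α - 1) * (u ^ β - 1) ∧ (u ^ α - 1) * (u ^ β - 1) ≤ (u-1)^2 := by
  have hα0 : (0:ℝ) < α := by linarith
  rcases eq_or_lt_of_le hu with h0 | h0
  · rw [← h0, Real.zero_rpow (ne_of_gt hα0), Real.zero_rpow (ne_of_gt hβ0)]
    constructor <;> nlinarith
  constructor
  · rcases le_or_gt u 1 with h1 | h1
    · -- u ≤ 1
      have hA : u ^ α ≤ u := by
        have := Real.rpow_le_rpow_of_exponent_ge h0 h1 hα
        rwa [Real.rpow_one] at this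
      have hB : u ^ β ≤ 1 + β * (u - 1) := rpow_le_one_add_mul u β hu hβ0.le hβ1
      have hA1 : u ^ α ≤ 1 := by
        have := Real.rpow_le_one hu h1 hα0.le
        exact this
      have hB1 : u ^ β ≤ 1 := Real.rpow_le_one hu h1 hβ0.le
      nlinarith [mul_nonneg (by linarith : (0:ℝ) ≤ 1 - u) (by linarith : (0:ℝ) ≤ 1 - u)]
    · -- u > 1
      have hu1 : (1:ℝ) ≤ u := h1.le
      have hid : u ^ (α - 1) * u ^ (β - 1) = 1 := by
        rw [← Real.rpow_add h0, show α - 1 + (β - 1) = 0 by linarith, Real.rpow_zero]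
      have hA : u ^ (α-1) * (u - 1) ≤ u ^ α - 1 := by
        have e := Real.rpow_add h0 (α-1) 1
        rw [sub_add_cancel, Real.rpow_one] at e
        have h1' : (1:ℝ) ≤ u ^ (α-1) := Real.one_le_rpow hu1 (by linarith)
        nlinarith
      have hB : β * (u ^ (β-1) * (u - 1)) ≤ u ^ β - 1 := by
        have e := Real.rpow_add h0 (β-1) 1
        rw [sub_add_cancel, Real.rpow_one] at e
        -- AM-GM: 1 ≤ (1-β) u^β + β u^(β-1)
        have gm := Real.geom_mean_le_arith_mean2_weighted (by linarith : (0:ℝ) ≤ 1 - β)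
          hβ0.le (Real.rpow_nonneg hu β) (Real.rpow_nonneg hu (β-1)) (by ring)
        have egm : (u ^ β) ^ (1 - β) * (u ^ (β-1)) ^ β = 1 := by
          rw [← Real.rpow_mul hu, ← Real.rpow_mul hu, ← Real.rpow_add h0,
            show β * (1-β) + (β-1) * β = 0 by ring, Real.rpow_zero]
        rw [egm] at gm
        nlinarith
      have hAnn : 0 ≤ u ^ (α-1) * (u - 1) :=
        mul_nonneg (Real.rpow_nonneg hu _) (by linarith)
      have hBnn : 0 ≤ β * (u ^ (β-1) * (u - 1)) :=
        mul_nonneg hβ0.le (mul_nonneg (Real.rpow_nonneg hu _) (by linarith))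
      have := mul_le_mul hA hB hBnn (by nlinarith)
      calc β * (u-1)^2 = (u ^ (α-1) * (u-1)) * (β * (u ^ (β-1) * (u-1))) := by
            rw [show (u ^ (α-1) * (u-1)) * (β * (u ^ (β-1) * (u-1)))
              = β * (u ^ (α-1) * u ^ (β-1)) * ((u-1)*(u-1)) by ring, hid]; ring
        _ ≤ (u ^ α - 1) * (u ^ β - 1) := this
  · -- upper bound via AM-GM
    have h4 := two_mul_le_rpow_add u α β hu hα0 hβ0 hs
    have hid : u ^ α * u ^ β = u ^ 2 := by
      rw [← Real.rpow_add h0, hs, ← Real.rpow_natCast u 2]; norm_num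
    nlinarith [Real.rpow_nonneg hu α, Real.rpow_nonneg hu β]

/-- For `z ≥ 0`, `p > 1`: `z^p - 1 - p(z-1) ≤ p * (z-1)(z^{p-1}-1)`. -/
lemma d2_le_p_d1 (p z : ℝ) (hp : 1 < p) (hz : 0 ≤ z) :
    z ^ p - 1 - p * (z - 1) ≤ p * ((z - 1) * (z ^ (p-1) - 1)) := by
  have hp0 : (0:ℝ) < p := by linarith
  have hzp : z ^ (p-1) * z = z ^ p := by
    have e := Real.rpow_add' hz (show p - 1 + 1 ≠ 0 by intro h; simp at h; linarith)
    rw [sub_add_cancel, Real.rpow_one] at e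
    exact e.symm
  -- AM-GM: z^(p-1) ≤ ((p-1)/p) z^p + 1/p
  have gm := Real.geom_mean_le_arith_mean2_weighted
    (by apply div_nonneg <;> linarith : (0:ℝ) ≤ (p-1)/p) (by positivity : (0:ℝ) ≤ 1/p)
    (Real.rpow_nonneg hz p) zero_le_one (by field_simp; ring)
  have egm : (z ^ p) ^ ((p-1)/p) * (1:ℝ) ^ ((1:ℝ)/p) = z ^ (p-1) := by
    rw [Real.one_rpow, mul_one, ← Real.rpow_mul hz,
      show p * ((p-1)/p) = p - 1 by field_simp]
  rw [egm, mul_one] at gm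
  have gm2 : p * z ^ (p-1) ≤ (p-1) * z ^ p + 1 := by
    have h2 := mul_le_mul_of_nonneg_left gm hp0.le
    calc p * z ^ (p-1) ≤ p * ((p-1)/p * z ^ p + 1/p) := h2
      _ = (p-1) * z ^ p + 1 := by field_simp
  nlinarith [gm2, hzp]

/-- For `z ≥ 0`, `p > 1`, `K = max 1 (1/(p-1))`:
`(z-1)(z^{p-1}-1) ≤ K (z^p - 1 - p(z-1))`. -/
lemma d1_le_K_d2 (p z : ℝ) (hp : 1 < p) (hz : 0 ≤ z) :
    (z - 1) * (z ^ (p-1) - 1) ≤ max 1 (1/(p-1)) * (z ^ p - 1 - p * (z - 1)) := by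
  set K : ℝ := max 1 (1/(p-1)) with hK
  have hp1 : (0:ℝ) < p - 1 := by linarith
  have hK1 : (1:ℝ) ≤ K := le_max_left _ _
  have hK2 : 1/(p-1) ≤ K := le_max_right _ _
  have hKp1 : (1:ℝ) ≤ K * (p-1) := by
    rw [div_le_iff₀ hp1] at hK2; linarith
  have hKp : (0:ℝ) < K * p - 1 := by nlinarith
  set a : ℝ := (K-1)/(K*p-1) with ha
  set b : ℝ := 1/(K*p-1) with hb
  set cc : ℝ := (K*p-1-K)/(K*p-1) with hcc
  have ha0 : 0 ≤ a := div_nonneg (by linarith) hKp.le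
  have hb0 : 0 ≤ b := div_nonneg zero_le_one hKp.le
  have hcc0 : 0 ≤ cc := div_nonneg (by nlinarith) hKp.le
  have habc : a + b + cc = 1 := by rw [ha, hb, hcc]; field_simp; ring
  have gm := Real.geom_mean_le_arith_mean3_weighted ha0 hb0 hcc0
    (Real.rpow_nonneg hz p) (Real.rpow_nonneg hz (p-1)) zero_le_one habc
  have eexp : p * a + (p-1) * b = 1 := by
    rw [ha, hb, mul_div_assoc', mul_div_assoc', mul_one, ← add_div,
      div_eq_one_iff_eq hKp.ne']; ring
  have egm : (z ^ p) ^ a * (z ^ (p-1)) ^ b * (1:ℝ) ^ cc = z := by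
    rw [Real.one_rpow, mul_one, ← Real.rpow_mul hz, ← Real.rpow_mul hz,
      ← Real.rpow_add' hz (by rw [eexp]; norm_num), eexp, Real.rpow_one]
  rw [egm, mul_one] at gm
  -- multiply by (K*p - 1)
  have key : (K*p-1) * z ≤ (K-1) * z ^ p + z ^ (p-1) + (K*p-1-K) := by
    have h2 := mul_le_mul_of_nonneg_left gm hKp.le
    calc (K*p-1) * z ≤ (K*p-1) * (a * z ^ p + b * z ^ (p-1) + cc) := h2
      _ = (K-1) * z ^ p + z ^ (p-1) + (K*p-1-K) := by
          rw [ha, hb, hcc]; field_simp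
  have hzp : z ^ (p-1) * z = z ^ p := by
    have e := Real.rpow_add' hz (show p - 1 + 1 ≠ 0 by intro h; simp at h; linarith)
    rw [sub_add_cancel, Real.rpow_one] at e
    exact e.symm
  nlinarith [key, hzp]

lemma rpow_le_one_add_rpow (w t q : ℝ) (hw : 0 ≤ w) (ht : 0 ≤ t) (htq : t ≤ q) :
    w ^ t ≤ 1 + w ^ q := by
  rcases le_total w 1 with h1 | h1
  · have := Real.rpow_le_one hw h1 ht
    have := Real.rpow_nonneg hw q
    linarith
  · have := Real.rpow_le_rpow_of_exponent_le h1 htq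
    linarith

lemma neg_case (p c C w : ℝ) (hp : 1 < p) (hc0 : 0 < c) (hcp : c * p ≤ 1/2)
    (hc2 : c ≤ 1/3) (hC1 : 3 ≤ C) (hC2 : 3 ≤ C * (p-1)) (hw : 0 < w) :
    c * (w ^ p - 1 - p * (-w - 1)) ≤ (-w - 1) * (-(w ^ (p-1)) - 1) ∧
    (-w - 1) * (-(w ^ (p-1)) - 1) ≤ C * (w ^ p - 1 - p * (-w - 1)) ∧
    c * (-(w ^ (p/2)) - 1) ^ 2 ≤ (-w - 1) * (-(w ^ (p-1)) - 1) ∧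
    (-w - 1) * (-(w ^ (p-1)) - 1) ≤ C * (-(w ^ (p/2)) - 1) ^ 2 := by
  have hw0 : (0:ℝ) ≤ w := hw.le
  set A := w ^ p with hA
  set B := w ^ (p-1) with hB
  set S := w ^ (p/2) with hS
  have hA0 : 0 ≤ A := Real.rpow_nonneg hw0 _
  have hB0 : 0 ≤ B := Real.rpow_nonneg hw0 _
  have hS0 : 0 ≤ S := Real.rpow_nonneg hw0 _
  clear_value A B S
  have hwB : B * w = A := by
    rw [hA, hB]
    have e := Real.rpow_add hw (p-1) 1
    rw [sub_add_cancel, Real.rpow_one] at e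
    exact e.symm
  have hSS : S * S = A := by
    rw [hA, hS, ← Real.rpow_add hw]
    ring_nf
  have hwle : w ≤ 1 + A := by
    have := rpow_le_one_add_rpow w 1 p hw0 zero_le_one hp.le
    rwa [Real.rpow_one, ← hA] at this
  have hBle : B ≤ 1 + A := by
    rw [hB, hA]; exact rpow_le_one_add_rpow w (p-1) p hw0 (by linarith) (by linarith)
  have hSle : S ≤ 1 + A := by
    rw [hS, hA]; exact rpow_le_one_add_rpow w (p/2) p hw0 (by linarith) (by linarith)
  have hd1 : (-w - 1) * (-B - 1) = 1 + w + B + A := by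
    have : (-w - 1) * (-B - 1) = B * w + w + B + 1 := by ring
    rw [this, hwB]; ring
  have hd3 : (-S - 1) ^ 2 = A + 2*S + 1 := by
    have : (-S - 1) ^ 2 = S * S + 2*S + 1 := by ring
    rw [this, hSS]
  have hc1p : c ≤ c * p := by nlinarith [mul_le_mul_of_nonneg_left hp.le hc0.le]
  have hc12 : c ≤ 1/2 := by linarith
  have hcA2 : c * A ≤ A / 2 := by
    have := mul_le_mul_of_nonneg_right hc12 hA0; linarith
  have hcA3 : c * A ≤ A / 3 := by
    have := mul_le_mul_of_nonneg_right hc2 hA0; linarith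
  have hcpw : c * (p * w) ≤ w / 2 := by
    have := mul_le_mul_of_nonneg_right hcp hw0; nlinarith
  have hcS : c * S ≤ S / 3 := by
    have := mul_le_mul_of_nonneg_right hc2 hS0; linarith
  have hC0 : (0:ℝ) ≤ C := by linarith
  have hCA : 3 * A ≤ C * A := by nlinarith
  have hCpw : 0 ≤ C * (p * w) := by positivity
  refine ⟨?_, ?_, ?_, ?_⟩
  · rw [hd1]; linarith [hcA2, hcpw, hcp, hc0.le, hB0, hA0, hw0]
  · rw [hd1]; linarith [hCA, hCpw, hC2, hwle, hBle, hA0]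
  · rw [hd1, hd3]; linarith [hcA3, hcS, hc2, hSle, hB0, hw0, hA0]
  · rw [hd1, hd3]
    nlinarith [hwle, hBle, mul_nonneg (by linarith : (0:ℝ) ≤ C - 3)
      (by linarith : (0:ℝ) ≤ A + 2*S + 1), hS0]

theorem stmt0 (p : ℝ) (hp : 1 < p) :
    (∀ z : ℝ,
        0 ≤ (z - 1) * (sgnPow (p - 1) z - 1) ∧
        0 ≤ |z| ^ p - 1 - p * (z - 1) ∧
        0 ≤ (sgnPow (p / 2) z - 1) ^ 2) ∧
    ∃ c C : ℝ, 0 < c ∧ c ≤ C ∧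
      ∀ z : ℝ,
        c * (|z| ^ p - 1 - p * (z - 1)) ≤ (z - 1) * (sgnPow (p - 1) z - 1) ∧
        (z - 1) * (sgnPow (p - 1) z - 1) ≤ C * (|z| ^ p - 1 - p * (z - 1)) ∧
        c * (sgnPow (p / 2) z - 1) ^ 2 ≤ (z - 1) * (sgnPow (p - 1) z - 1) ∧
        (z - 1) * (sgnPow (p - 1) z - 1) ≤ C * (sgnPow (p / 2) z - 1) ^ 2 := by
  have hp0 : (0:ℝ) < p := by linarith
  have hp1 : (0:ℝ) < p - 1 := by linarith
  set β₀ : ℝ := min (2/p) (2 - 2/p) with hβ₀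
  set α₀ : ℝ := max (2/p) (2 - 2/p) with hα₀
  have h2p : (0:ℝ) < 2/p := by positivity
  have h2p' : (0:ℝ) < 2 - 2/p := by
    have : 2/p < 2 := by rw [div_lt_iff₀ hp0]; nlinarith
    linarith
  have hb0 : 0 < β₀ := lt_min h2p h2p'
  have hsum : α₀ + β₀ = 2 := by
    rw [hα₀, hβ₀]
    have := min_add_max (2/p) (2 - 2/p)
    linarith
  have hbm : β₀ ≤ α₀ := min_le_max
  have hb1 : β₀ ≤ 1 := by linarith
  have ha1 : 1 ≤ α₀ := by linarith
  set c : ℝ := min (1/(2*p)) (β₀/3) with hc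
  set C : ℝ := max 3 (3/(p-1)) with hC
  have hc0 : 0 < c := lt_min (by positivity) (by positivity)
  have hc1 : c ≤ 1/(2*p) := min_le_left _ _
  have hc3 : c ≤ β₀/3 := min_le_right _ _
  have hc2 : c ≤ 1/3 := by linarith
  have hcβ : c ≤ β₀ := by linarith
  have hcp : c * p ≤ 1/2 := by
    have h := mul_le_mul_of_nonneg_right hc1 hp0.le
    calc c * p ≤ (1/(2*p)) * p := h
      _ = 1/2 := by field_simp
  have hC1 : (3:ℝ) ≤ C := le_max_left _ _
  have hC1' : (1:ℝ) ≤ C := by linarith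
  have hC2' : 3/(p-1) ≤ C := le_max_right _ _
  have hC2 : 3 ≤ C * (p-1) := by rw [div_le_iff₀ hp1] at hC2'; linarith
  have hKC : max 1 (1/(p-1)) ≤ C := by
    apply max_le (by linarith)
    have h : 1/(p-1) ≤ 3/(p-1) := by gcongr; norm_num
    linarith
  have hcC : c ≤ C := by linarith
  clear_value β₀ α₀ c C
  have main : ∀ z : ℝ,
      c * (|z| ^ p - 1 - p * (z - 1)) ≤ (z - 1) * (sgnPow (p - 1) z - 1) ∧
      (z - 1) * (sgnPow (p - 1) z - 1) ≤ C * (|z| ^ p - 1 - p * (z - 1)) ∧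
      c * (sgnPow (p / 2) z - 1) ^ 2 ≤ (z - 1) * (sgnPow (p - 1) z - 1) ∧
      (z - 1) * (sgnPow (p - 1) z - 1) ≤ C * (sgnPow (p / 2) z - 1) ^ 2 := by
    intro z
    rcases lt_or_ge z 0 with hzneg | hz
    · have e1 : sgnPow (p - 1) z = -((-z) ^ (p-1)) := by
        have := sgnPow_neg' (p-1) z hzneg
        rw [this]
      have e2 : sgnPow (p / 2) z = -((-z) ^ (p/2)) := sgnPow_neg' (p/2) z hzneg
      have e3 : |z| = -z := abs_of_neg hzneg
      have h := neg_case p c C (-z) hp hc0 hcp hc2 hC1 hC2 (by linarith)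
      rw [neg_neg] at h
      rw [e1, e2, e3]
      exact h
    · have e1 : sgnPow (p - 1) z = z ^ (p-1) :=
        sgnPow_nonneg' (p-1) z (ne_of_gt (show (0:ℝ) < p - 1 by linarith)) hz
      have e2 : sgnPow (p / 2) z = z ^ (p/2) :=
        sgnPow_nonneg' (p/2) z (ne_of_gt (show (0:ℝ) < p/2 by linarith)) hz
      have e3 : |z| = z := abs_of_nonneg hz
      rw [e1, e2, e3]
      set u : ℝ := z ^ (p/2) with hu
      have hu0 : 0 ≤ u := Real.rpow_nonneg hz _
      have iu1 : u ^ (2/p) = z := by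
        rw [hu, ← Real.rpow_mul hz, show p/2 * (2/p) = 1 by field_simp, Real.rpow_one]
      have iu2 : u ^ (2 - 2/p) = z ^ (p-1) := by
        rw [hu, ← Real.rpow_mul hz]
        congr 1
        field_simp
      clear_value u
      have key := key_cmp α₀ β₀ u hb0 hb1 ha1 hsum hu0
      have hprod : (u ^ α₀ - 1) * (u ^ β₀ - 1) = (z - 1) * (z ^ (p-1) - 1) := by
        rcases le_total (2/p) (2 - 2/p) with h | h
        · rw [hα₀, hβ₀, max_eq_right h, min_eq_left h, iu1, iu2]; ring
        · rw [hα₀, hβ₀, max_eq_left h, min_eq_right h, iu1, iu2]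
      rw [hprod] at key
      obtain ⟨klow, kup⟩ := key
      have hd2p := d2_le_p_d1 p z hp hz
      have hd2K := d1_le_K_d2 p z hp hz
      have bern : 0 ≤ z ^ p - 1 - p * (z - 1) := by
        have hb := one_add_mul_self_le_rpow_one_add (s := z - 1) (by linarith) hp.le
        have e : 1 + (z - 1) = z := by ring
        rw [e] at hb
        linarith
      have hd1nn : 0 ≤ (z - 1) * (z ^ (p-1) - 1) := by
        have := mul_nonneg hb0.le (sq_nonneg (u - 1))
        linarith
      refine ⟨?_, ?_, ?_, ?_⟩
      · have h1 := mul_le_mul_of_nonneg_left hd2p hc0.le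
        nlinarith [h1, hd1nn, hcp]
      · have h2 := mul_le_mul_of_nonneg_right hKC bern
        linarith
      · have h3 := mul_le_mul_of_nonneg_right hcβ (sq_nonneg (u - 1))
        linarith
      · have h4 := mul_nonneg (show (0:ℝ) ≤ C - 1 by linarith) (sq_nonneg (u - 1))
        linarith
  refine ⟨?_, c, C, hc0, hcC, main⟩
  intro z
  obtain ⟨h1, h2, h3, h4⟩ := main z
  refine ⟨?_, ?_, sq_nonneg _⟩
  · have := mul_nonneg hc0.le (sq_nonneg (sgnPow (p / 2) z - 1))
    linarith
  · nlinarith [h1, h2, hc2, hC1]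
end

section
/- Let d ∈ ℕ*, α ∈ (0,1), k ∈ (0,α), and m(x) := ⟨x⟩^k. Then there exists a constant C > 0 (depending only on d, α, k) such that for all x ∈ ℝ^d, ∫_{ℝ^d} |m(y) − m(x)| / |y−x|^{d+α} dy ≤ C ⟨x⟩^{k−α}. -/
open MeasureTheory Set Metric
open scoped ENNReal

local notation "dim" => Module.finrank ℝ

section PolarLemmas

variable {E : Type*} [NormedAddCommGroup E] [NormedSpace ℝ E] [MeasurableSpace E]
  [Nontrivial E] [FiniteDimensional ℝ E] [BorelSpace E]
  (μ : Measure E) [μ.IsAddHaarMeasure]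

lemma polar_lintegral (f : ℝ → ℝ≥0∞) (hf : Measurable f) :
    ∫⁻ x, f ‖x‖ ∂μ = μ.toSphere Set.univ *
      ∫⁻ r in Ioi (0:ℝ), ENNReal.ofReal (r ^ (dim E - 1)) * f r := by
  have hmeas : Measurable fun p : sphere (0 : E) 1 × Ioi (0 : ℝ) => f p.2 :=
    hf.comp (measurable_subtype_coe.comp measurable_snd)
  calc
    ∫⁻ x, f ‖x‖ ∂μ = ∫⁻ x : ({(0)}ᶜ : Set E), f (‖x.1‖) ∂(μ.comap (↑)) := by
      rw [lintegral_subtype_comap (measurableSet_singleton _).compl fun x ↦ f (‖x‖),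
        MeasureTheory.restrict_compl_singleton]
    _ = ∫⁻ x : sphere (0 : E) 1 × Ioi (0 : ℝ), f x.2
        ∂μ.toSphere.prod (.volumeIoiPow (dim E - 1)) := by
      rw [← μ.measurePreserving_homeomorphUnitSphereProd.lintegral_comp hmeas]
      simp only [homeomorphUnitSphereProd_apply_snd_coe, div_one]
    _ = μ.toSphere Set.univ * ∫⁻ x : Ioi (0 : ℝ), f x ∂(Measure.volumeIoiPow (dim E - 1)) := by
      rw [lintegral_prod _ hmeas.aemeasurable]
      simp [lintegral_const, mul_comm]
    _ = μ.toSphere Set.univ * ∫⁻ r in Ioi (0:ℝ), ENNReal.ofReal (r ^ (dim E - 1)) * f r := by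
      rw [Measure.volumeIoiPow, lintegral_withDensity_eq_lintegral_mul _
        (by fun_prop) (show Measurable fun x : Ioi (0:ℝ) => f ↑x from hf.comp measurable_subtype_coe),
        ← lintegral_subtype_comap measurableSet_Ioi]
      rfl

lemma ball_lintegral (p : ℝ) (hp : -(dim E : ℝ) < p) (r : ℝ) (hr : 0 < r) :
    ∫⁻ x in closedBall (0:E) r, ENNReal.ofReal (‖x‖ ^ p) ∂μ =
      μ.toSphere Set.univ * ENNReal.ofReal (r ^ (p + dim E) / (p + dim E)) := by
  have hn : (0:ℝ) < dim E := by exact_mod_cast Nat.cast_pos.mpr Module.finrank_pos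
  set n := dim E
  have hq : (-1:ℝ) < (n - 1 : ℕ) + p := by
    have : ((n - 1 : ℕ) : ℝ) = (n : ℝ) - 1 := by
      rw [Nat.cast_sub Module.finrank_pos]; norm_num; rfl
    rw [this]; linarith
  set f : ℝ → ℝ≥0∞ := fun t => if t ≤ r then ENNReal.ofReal (t ^ p) else 0 with hf
  have hfm : Measurable f := Measurable.ite measurableSet_Iic
    (by fun_prop) measurable_const
  have h1 : ∫⁻ x in closedBall (0:E) r, ENNReal.ofReal (‖x‖ ^ p) ∂μ = ∫⁻ x, f ‖x‖ ∂μ := by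
    rw [← lintegral_indicator measurableSet_closedBall]
    refine lintegral_congr fun x => ?_
    classical
    rw [Set.indicator_apply]
    simp only [mem_closedBall_zero_iff, hf]
  rw [h1, polar_lintegral μ f hfm]
  congr 1
  have h2 : ∫⁻ t in Ioi (0:ℝ), ENNReal.ofReal (t ^ (n - 1)) * f t
      = ∫⁻ t in Ioc (0:ℝ) r, ENNReal.ofReal (t ^ ((n - 1 : ℕ) + p : ℝ)) := by
    classical
    calc ∫⁻ t in Ioi (0:ℝ), ENNReal.ofReal (t ^ (n - 1)) * f t
        = ∫⁻ t in Ioi (0:ℝ),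
            (Iic r).indicator (fun t => ENNReal.ofReal (t ^ ((n - 1 : ℕ) + p : ℝ))) t := by
          refine setLIntegral_congr_fun measurableSet_Ioi
            (fun t ht => ?_)
          have ht0 : 0 < t := ht
          rw [Set.indicator_apply]
          simp only [Set.mem_Iic, hf]
          split_ifs with h
          · rw [← ENNReal.ofReal_mul (by positivity), ← Real.rpow_natCast t (n-1),
              ← Real.rpow_add ht0]
          · rw [mul_zero]
      _ = ∫⁻ t in Iic r ∩ Ioi (0:ℝ), ENNReal.ofReal (t ^ ((n - 1 : ℕ) + p : ℝ)) := by
          rw [lintegral_indicator measurableSet_Iic, Measure.restrict_restrict measurableSet_Iic]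
      _ = ∫⁻ t in Ioc (0:ℝ) r, ENNReal.ofReal (t ^ ((n - 1 : ℕ) + p : ℝ)) := by
          rw [Set.inter_comm, Set.Ioi_inter_Iic]
  rw [h2, ← ofReal_integral_eq_lintegral_ofReal]
  · rw [← intervalIntegral.integral_of_le hr.le,
      integral_rpow (Or.inl hq)]
    have : ((n - 1 : ℕ) : ℝ) + p + 1 = p + n := by
      rw [Nat.cast_sub Module.finrank_pos]; push_cast; ring
    rw [this, Real.zero_rpow (by linarith), sub_zero]
  · exact (intervalIntegral.intervalIntegrable_rpow' hq).1
  · filter_upwards [ae_restrict_mem measurableSet_Ioc] with t ht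
    exact Real.rpow_nonneg ht.1.le _

lemma compl_ball_lintegral (p : ℝ) (hp : p + dim E < 0) (r : ℝ) (hr : 0 < r) :
    ∫⁻ x in (closedBall (0:E) r)ᶜ, ENNReal.ofReal (‖x‖ ^ p) ∂μ =
      μ.toSphere Set.univ * ENNReal.ofReal (-r ^ (p + dim E) / (p + dim E)) := by
  have hn : (0:ℝ) < dim E := by exact_mod_cast Nat.cast_pos.mpr Module.finrank_pos
  set n := dim E
  have hcast : ((n - 1 : ℕ) : ℝ) = (n : ℝ) - 1 := by
    rw [Nat.cast_sub Module.finrank_pos]; norm_num; rfl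
  have hq : ((n - 1 : ℕ) + p : ℝ) < -1 := by rw [hcast]; linarith
  set f : ℝ → ℝ≥0∞ := fun t => if t ≤ r then 0 else ENNReal.ofReal (t ^ p) with hf
  have hfm : Measurable f := Measurable.ite measurableSet_Iic
    measurable_const (by fun_prop)
  have h1 : ∫⁻ x in (closedBall (0:E) r)ᶜ, ENNReal.ofReal (‖x‖ ^ p) ∂μ = ∫⁻ x, f ‖x‖ ∂μ := by
    rw [← lintegral_indicator measurableSet_closedBall.compl]
    refine lintegral_congr fun x => ?_
    classical
    rw [Set.indicator_apply]
    simp only [Set.mem_compl_iff, mem_closedBall_zero_iff, hf]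
    split_ifs with h h' <;> simp_all
  rw [h1, polar_lintegral μ f hfm]
  congr 1
  have h2 : ∫⁻ t in Ioi (0:ℝ), ENNReal.ofReal (t ^ (n - 1)) * f t
      = ∫⁻ t in Ioi r, ENNReal.ofReal (t ^ ((n - 1 : ℕ) + p : ℝ)) := by
    classical
    have hsub : Ioi r ⊆ Ioi (0:ℝ) := fun t ht => lt_trans hr ht
    calc ∫⁻ t in Ioi (0:ℝ), ENNReal.ofReal (t ^ (n - 1)) * f t
        = ∫⁻ t in Ioi (0:ℝ),
            (Ioi r).indicator (fun t => ENNReal.ofReal (t ^ ((n - 1 : ℕ) + p : ℝ))) t := by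
          refine setLIntegral_congr_fun measurableSet_Ioi
            (fun t ht => ?_)
          have ht0 : 0 < t := ht
          rw [Set.indicator_apply]
          simp only [Set.mem_Ioi, hf]
          by_cases h : t ≤ r
          · simp [h, not_lt.mpr h]
          · rw [if_neg h, if_pos (not_le.mp h), ← ENNReal.ofReal_mul (by positivity),
              ← Real.rpow_natCast t (n-1), ← Real.rpow_add ht0]
      _ = ∫⁻ t in Ioi r ∩ Ioi (0:ℝ), ENNReal.ofReal (t ^ ((n - 1 : ℕ) + p : ℝ)) := by
          rw [lintegral_indicator measurableSet_Ioi, Measure.restrict_restrict measurableSet_Ioi]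
      _ = ∫⁻ t in Ioi r, ENNReal.ofReal (t ^ ((n - 1 : ℕ) + p : ℝ)) := by
          rw [Set.inter_eq_left.mpr hsub]
  rw [h2, ← ofReal_integral_eq_lintegral_ofReal]
  · rw [integral_Ioi_rpow_of_lt hq hr]
    congr 1
    have : ((n - 1 : ℕ) : ℝ) + p + 1 = p + n := by rw [hcast]; ring
    rw [this]
  · exact integrableOn_Ioi_rpow_of_lt hq hr
  · filter_upwards [ae_restrict_mem measurableSet_Ioi] with t ht
    exact Real.rpow_nonneg (le_trans hr.le (le_of_lt ht)) _

end PolarLemmas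

/-- Japanese bracket `⟨x⟩ = (1+|x|²)^{1/2}`. -/
noncomputable def jb {d : ℕ} (x : EuclideanSpace ℝ (Fin d)) : ℝ := Real.sqrt (1 + ‖x‖ ^ 2)

lemma one_le_jb {d : ℕ} (x : EuclideanSpace ℝ (Fin d)) : 1 ≤ jb x := by
  rw [jb]
  exact Real.le_sqrt_of_sq_le (by nlinarith [sq_nonneg ‖x‖])

lemma jb_le_add {d : ℕ} (x y : EuclideanSpace ℝ (Fin d)) : jb y ≤ jb x + ‖y - x‖ := by
  have hxy : ‖y‖ ≤ ‖x‖ + ‖y - x‖ := by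
    calc ‖y‖ = ‖x + (y - x)‖ := by rw [add_sub_cancel]
    _ ≤ ‖x‖ + ‖y - x‖ := norm_add_le _ _
  have h1 : jb y ≤ Real.sqrt (1 + (‖x‖ + ‖y - x‖) ^ 2) := by
    refine Real.sqrt_le_sqrt ?_
    have : (0:ℝ) ≤ ‖y‖ := norm_nonneg _
    nlinarith
  refine h1.trans ?_
  have hs : ‖x‖ ≤ Real.sqrt (1 + ‖x‖ ^ 2) := Real.le_sqrt_of_sq_le (by nlinarith)
  have h2 : Real.sqrt (1 + (‖x‖ + ‖y - x‖) ^ 2)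
      ≤ Real.sqrt ((Real.sqrt (1 + ‖x‖ ^ 2) + ‖y - x‖) ^ 2) := by
    refine Real.sqrt_le_sqrt ?_
    have hsq : Real.sqrt (1 + ‖x‖ ^ 2) ^ 2 = 1 + ‖x‖ ^ 2 := Real.sq_sqrt (by positivity)
    have hc : (0:ℝ) ≤ ‖y - x‖ := norm_nonneg _
    nlinarith
  refine h2.trans_eq ?_
  rw [Real.sqrt_sq (by positivity), jb]

lemma abs_jb_sub_le {d : ℕ} (x y : EuclideanSpace ℝ (Fin d)) : |jb y - jb x| ≤ ‖y - x‖ := by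
  rw [abs_sub_le_iff]
  constructor
  · linarith [jb_le_add x y]
  · have := jb_le_add y x
    rw [norm_sub_rev] at this
    linarith

lemma rpow_sub_rpow_le' {a b kk : ℝ} (hb : 0 < b) (hba : b ≤ a) (hk1 : kk ≤ 1) :
    a ^ kk - b ^ kk ≤ b ^ (kk - 1) * (a - b) := by
  have ha : 0 < a := lt_of_lt_of_le hb hba
  have h1 : a ^ kk ≤ b ^ (kk - 1) * a := by
    have hab : 1 ≤ a / b := (one_le_div hb).mpr hba
    have h3 : (a / b) ^ kk ≤ a / b := by
      have := Real.rpow_le_rpow_of_exponent_le hab hk1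
      rwa [Real.rpow_one] at this
    calc a ^ kk = b ^ kk * (a / b) ^ kk := by
          rw [← Real.mul_rpow hb.le (by positivity), mul_div_cancel₀ _ hb.ne']
      _ ≤ b ^ kk * (a / b) := mul_le_mul_of_nonneg_left h3 (Real.rpow_nonneg hb.le _)
      _ = b ^ (kk - 1) * a := by
          rw [Real.rpow_sub hb, Real.rpow_one]; field_simp
  have h2 : b ^ kk = b ^ (kk - 1) * b := by
    rw [← Real.rpow_add_one hb.ne' (kk - 1)]; ring_nf
  rw [mul_sub]
  linarith

lemma pointwise_bound {d : ℕ} (α k : ℝ) (hα : 0 < α ∧ α < 1) (hk : 0 < k ∧ k < α)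
    (x y : EuclideanSpace ℝ (Fin d)) :
    |jb y ^ k - jb x ^ k| / ‖y - x‖ ^ ((d : ℝ) + α) ≤
      if ‖y - x‖ ≤ jb x / 2 then (jb x / 2) ^ (k - 1) * ‖y - x‖ ^ (1 - ((d : ℝ) + α))
      else 5 * ‖y - x‖ ^ (k - ((d : ℝ) + α)) := by
  set D := (d : ℝ) + α with hD
  have hD0 : 0 < D := by
    have : (0:ℝ) ≤ (d:ℝ) := Nat.cast_nonneg d
    rw [hD]; linarith [hα.1]
  set a := jb y with hay
  set b := jb x with hbx
  set c := ‖y - x‖ with hc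
  have ha1 : 1 ≤ a := one_le_jb y
  have hb1 : 1 ≤ b := one_le_jb x
  have habs : |a - b| ≤ c := abs_jb_sub_le x y
  have hc0 : 0 ≤ c := norm_nonneg _
  have hk0 : 0 < k := hk.1
  have hk1 : k ≤ 1 := le_of_lt (lt_of_lt_of_le hk.2 hα.2.le)
  have hb2 : (0:ℝ) < b / 2 := by linarith
  split_ifs with hnear
  · -- near case
    rcases eq_or_lt_of_le hc0 with hc00 | hcpos
    · have hab : a = b := by
        have h0 : |a - b| ≤ 0 := le_trans habs hc00.ge
        have := abs_nonpos_iff.mp h0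
        linarith
      rw [hab, sub_self, abs_zero, zero_div]
      exact mul_nonneg (Real.rpow_nonneg hb2.le _) (Real.rpow_nonneg hc0 _)
    · have hmin : b / 2 ≤ a := by
        have h := (abs_sub_le_iff.mp habs).2
        linarith
      have hnum : |a ^ k - b ^ k| ≤ (b / 2) ^ (k - 1) * c := by
        rcases le_total b a with h | h
        · have h1 := rpow_sub_rpow_le' (by linarith : (0:ℝ) < b) h hk1
          have h2 : b ^ (k - 1) ≤ (b / 2) ^ (k - 1) :=
            Real.rpow_le_rpow_of_nonpos hb2 (by linarith) (by linarith)
          have hnn : 0 ≤ a ^ k - b ^ k := by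
            have := Real.rpow_le_rpow (by linarith : (0:ℝ) ≤ b) h hk0.le
            linarith
          rw [abs_of_nonneg hnn]
          have hab0 : 0 ≤ a - b := by linarith
          have habc : a - b ≤ c := (abs_sub_le_iff.mp habs).1
          calc a ^ k - b ^ k ≤ b ^ (k-1) * (a - b) := h1
            _ ≤ (b/2) ^ (k-1) * (a - b) := mul_le_mul_of_nonneg_right h2 hab0
            _ ≤ (b/2) ^ (k-1) * c :=
                mul_le_mul_of_nonneg_left habc (Real.rpow_nonneg hb2.le _)
        · have h1 := rpow_sub_rpow_le' (by linarith : (0:ℝ) < a) h hk1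
          have h2 : a ^ (k - 1) ≤ (b / 2) ^ (k - 1) :=
            Real.rpow_le_rpow_of_nonpos hb2 hmin (by linarith)
          have hnn : 0 ≤ b ^ k - a ^ k := by
            have := Real.rpow_le_rpow (by linarith : (0:ℝ) ≤ a) h hk0.le
            linarith
          rw [abs_sub_comm, abs_of_nonneg hnn]
          have hab0 : 0 ≤ b - a := by linarith
          have habc : b - a ≤ c := (abs_sub_le_iff.mp habs).2
          calc b ^ k - a ^ k ≤ a ^ (k-1) * (b - a) := h1
            _ ≤ (b/2) ^ (k-1) * (b - a) := mul_le_mul_of_nonneg_right h2 hab0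
            _ ≤ (b/2) ^ (k-1) * c :=
                mul_le_mul_of_nonneg_left habc (Real.rpow_nonneg hb2.le _)
      have hcD : 0 < c ^ D := Real.rpow_pos_of_pos hcpos D
      calc |a ^ k - b ^ k| / c ^ D ≤ ((b/2) ^ (k-1) * c) / c ^ D :=
            (div_le_div_iff_of_pos_right hcD).mpr hnum
        _ = (b/2) ^ (k-1) * c ^ (1 - D) := by
            rw [Real.rpow_sub hcpos, Real.rpow_one, mul_div_assoc]
  · -- far case
    push_neg at hnear
    have hcpos : 0 < c := lt_trans hb2 hnear
    have hb2c : b ≤ 2 * c := by linarith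
    have hac : a ≤ 3 * c := by
      have := jb_le_add x y
      rw [← hay, ← hbx, ← hc] at this
      linarith
    have h3k : (3:ℝ) ^ k ≤ 3 := by
      have := Real.rpow_le_rpow_of_exponent_le (by norm_num : (1:ℝ) ≤ 3) hk1
      rwa [Real.rpow_one] at this
    have h2k : (2:ℝ) ^ k ≤ 2 := by
      have := Real.rpow_le_rpow_of_exponent_le (by norm_num : (1:ℝ) ≤ 2) hk1
      rwa [Real.rpow_one] at this
    have hck : (0:ℝ) ≤ c ^ k := Real.rpow_nonneg hc0 _
    have hak : a ^ k ≤ 3 * c ^ k := by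
      calc a ^ k ≤ (3 * c) ^ k := Real.rpow_le_rpow (by linarith) hac hk0.le
        _ = 3 ^ k * c ^ k := Real.mul_rpow (by norm_num) hc0
        _ ≤ 3 * c ^ k := mul_le_mul_of_nonneg_right h3k hck
    have hbk : b ^ k ≤ 2 * c ^ k := by
      calc b ^ k ≤ (2 * c) ^ k := Real.rpow_le_rpow (by linarith) hb2c hk0.le
        _ = 2 ^ k * c ^ k := Real.mul_rpow (by norm_num) hc0
        _ ≤ 2 * c ^ k := mul_le_mul_of_nonneg_right h2k hck
    have hnum : |a ^ k - b ^ k| ≤ 5 * c ^ k := by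
      have h1 : |a ^ k - b ^ k| ≤ |a ^ k| + |b ^ k| := abs_sub _ _
      rw [abs_of_nonneg (Real.rpow_nonneg (by linarith) k),
        abs_of_nonneg (Real.rpow_nonneg (by linarith) k)] at h1
      linarith
    have hcD : 0 < c ^ D := Real.rpow_pos_of_pos hcpos D
    calc |a ^ k - b ^ k| / c ^ D ≤ (5 * c ^ k) / c ^ D := (div_le_div_iff_of_pos_right hcD).mpr hnum
      _ = 5 * c ^ (k - D) := by rw [Real.rpow_sub hcpos, mul_div_assoc]

theorem stmt2 (d : ℕ) (hd : 0 < d) (α k : ℝ) (hα : 0 < α ∧ α < 1) (hk : 0 < k ∧ k < α) :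
    ∃ C : ℝ, 0 < C ∧ ∀ x : EuclideanSpace ℝ (Fin d),
      ∫⁻ y : EuclideanSpace ℝ (Fin d),
          ENNReal.ofReal (|jb y ^ k - jb x ^ k| / ‖y - x‖ ^ ((d : ℝ) + α)) ≤
        ENNReal.ofReal (C * jb x ^ (k - α)) := by
  obtain ⟨hα0, hα1⟩ := hα
  obtain ⟨hk0, hkα⟩ := hk
  haveI : Nonempty (Fin d) := ⟨⟨0, hd⟩⟩
  haveI : Nontrivial (EuclideanSpace ℝ (Fin d)) := inferInstance
  have h1a : (0:ℝ) < 1 - α := by linarith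
  have hak : (0:ℝ) < α - k := by linarith
  have hfr : (dim (EuclideanSpace ℝ (Fin d)) : ℝ) = d := by
    rw [finrank_euclideanSpace_fin]
  set S := (volume : Measure (EuclideanSpace ℝ (Fin d))).toSphere Set.univ with hSdef
  have hStop : S ≠ ⊤ := measure_ne_top _ _
  set T := S.toReal with hT
  have hT0 : (0:ℝ) ≤ T := ENNReal.toReal_nonneg
  have hSof : S = ENNReal.ofReal T := (ENNReal.ofReal_toReal hStop).symm
  set c2 := (2:ℝ) ^ (α - k) with hc2def
  have hc2 : (0:ℝ) < c2 := Real.rpow_pos_of_pos two_pos _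
  refine ⟨T * (1/(1-α) + 5/(α-k)) * c2 + 1, ?_, ?_⟩
  · have : (0:ℝ) ≤ T * (1/(1-α) + 5/(α-k)) * c2 := by
      apply mul_nonneg (mul_nonneg hT0 _) hc2.le
      have := div_nonneg (by norm_num : (0:ℝ) ≤ 1) h1a.le
      have := div_nonneg (by norm_num : (0:ℝ) ≤ 5) hak.le
      linarith
    linarith
  intro x
  set R := jb x with hR
  have hR1 : 1 ≤ R := one_le_jb x
  have hr : (0:ℝ) < R / 2 := by linarith
  set D := (d : ℝ) + α with hD
  set g : EuclideanSpace ℝ (Fin d) → ℝ := fun z =>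
    if ‖z‖ ≤ R / 2 then (R / 2) ^ (k - 1) * ‖z‖ ^ (1 - D) else 5 * ‖z‖ ^ (k - D) with hg
  have step1 : ∫⁻ y : EuclideanSpace ℝ (Fin d),
      ENNReal.ofReal (|jb y ^ k - jb x ^ k| / ‖y - x‖ ^ ((d : ℝ) + α)) ≤
      ∫⁻ y, ENNReal.ofReal (g (y - x)) := by
    refine lintegral_mono fun y => ENNReal.ofReal_le_ofReal ?_
    exact pointwise_bound α k ⟨hα0, hα1⟩ ⟨hk0, hkα⟩ x y
  have step2 : ∫⁻ y, ENNReal.ofReal (g (y - x)) = ∫⁻ z, ENNReal.ofReal (g z) :=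
    lintegral_sub_right_eq_self (fun z => ENNReal.ofReal (g z)) x
  have hnearp : -(dim (EuclideanSpace ℝ (Fin d)) : ℝ) < 1 - D := by
    rw [hfr, hD]; linarith
  have hfarp : (k - D) + (dim (EuclideanSpace ℝ (Fin d)) : ℝ) < 0 := by
    rw [hfr, hD]; linarith
  have hexp1 : (1 - D) + (dim (EuclideanSpace ℝ (Fin d)) : ℝ) = 1 - α := by
    rw [hfr, hD]; ring
  have hexp2 : (k - D) + (dim (EuclideanSpace ℝ (Fin d)) : ℝ) = k - α := by
    rw [hfr, hD]; ring
  have hnear : ∫⁻ z in closedBall (0 : EuclideanSpace ℝ (Fin d)) (R/2), ENNReal.ofReal (g z)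
      = ENNReal.ofReal ((R/2) ^ (k-1)) * (S * ENNReal.ofReal ((R/2) ^ (1-α) / (1-α))) := by
    have e1 : ∫⁻ z in closedBall (0 : EuclideanSpace ℝ (Fin d)) (R/2), ENNReal.ofReal (g z)
        = ∫⁻ z in closedBall (0 : EuclideanSpace ℝ (Fin d)) (R/2),
            ENNReal.ofReal ((R/2) ^ (k-1)) * ENNReal.ofReal (‖z‖ ^ (1-D)) := by
      refine setLIntegral_congr_fun measurableSet_closedBall
        (fun z hz => ?_)
      rw [hg]
      simp only
      rw [if_pos (mem_closedBall_zero_iff.mp hz),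
        ENNReal.ofReal_mul (Real.rpow_nonneg hr.le _)]
    rw [e1, lintegral_const_mul' _ _ ENNReal.ofReal_ne_top,
      ball_lintegral volume (1-D) hnearp (R/2) hr, hexp1]
  have hfar : ∫⁻ z in (closedBall (0 : EuclideanSpace ℝ (Fin d)) (R/2))ᶜ, ENNReal.ofReal (g z)
      = ENNReal.ofReal 5 * (S * ENNReal.ofReal (-(R/2) ^ (k-α) / (k-α))) := by
    have e2 : ∫⁻ z in (closedBall (0 : EuclideanSpace ℝ (Fin d)) (R/2))ᶜ, ENNReal.ofReal (g z)
        = ∫⁻ z in (closedBall (0 : EuclideanSpace ℝ (Fin d)) (R/2))ᶜ,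
            ENNReal.ofReal 5 * ENNReal.ofReal (‖z‖ ^ (k-D)) := by
      refine setLIntegral_congr_fun measurableSet_closedBall.compl
        (fun z hz => ?_)
      rw [hg]
      simp only
      rw [if_neg (fun h => (Set.mem_compl_iff _ _).mp hz (mem_closedBall_zero_iff.mpr h)),
        ENNReal.ofReal_mul (by norm_num)]
    rw [e2, lintegral_const_mul' _ _ ENNReal.ofReal_ne_top,
      compl_ball_lintegral volume (k-D) hfarp (R/2) hr, hexp2]
  have hAnn : (0:ℝ) ≤ (R/2) ^ (1-α) / (1-α) := by
    apply div_nonneg (Real.rpow_nonneg hr.le _) h1a.le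
  have hBnn : (0:ℝ) ≤ -(R/2) ^ (k-α) / (k-α) := by
    rw [neg_div, neg_nonneg]
    apply div_nonpos_of_nonneg_of_nonpos (Real.rpow_nonneg hr.le _)
    linarith
  have total : ∫⁻ z : EuclideanSpace ℝ (Fin d), ENNReal.ofReal (g z)
      = ENNReal.ofReal ((R/2) ^ (k-1) * (T * ((R/2) ^ (1-α) / (1-α)))
          + 5 * (T * (-(R/2) ^ (k-α) / (k-α)))) := by
    rw [← lintegral_add_compl (fun z => ENNReal.ofReal (g z))
      (measurableSet_closedBall : MeasurableSet (closedBall (0 : EuclideanSpace ℝ (Fin d)) (R/2))),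
      hnear, hfar, hSof,
      ← ENNReal.ofReal_mul hT0, ← ENNReal.ofReal_mul (Real.rpow_nonneg hr.le _),
      ← ENNReal.ofReal_mul hT0, ← ENNReal.ofReal_mul (by norm_num : (0:ℝ) ≤ 5),
      ← ENNReal.ofReal_add (by positivity) (mul_nonneg (by norm_num) (mul_nonneg hT0 hBnn))]
  refine le_trans step1 ?_
  rw [step2, total]
  refine ENNReal.ofReal_le_ofReal ?_
  -- real arithmetic
  have hRk0 : (0:ℝ) ≤ R ^ (k - α) := Real.rpow_nonneg (by linarith) _
  have hpow : (R/2) ^ (k-1) * (R/2) ^ (1-α) = (R/2) ^ (k-α) := by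
    rw [← Real.rpow_add hr]; ring_nf
  have hhalf : (R/2) ^ (k-α) = c2 * R ^ (k-α) := by
    rw [Real.div_rpow (by linarith : (0:ℝ) ≤ R) (by norm_num : (0:ℝ) ≤ 2), hc2def,
      div_eq_mul_inv, ← Real.rpow_neg (by norm_num : (0:ℝ) ≤ 2), neg_sub]
    ring
  have key : (R/2) ^ (k-1) * (T * ((R/2) ^ (1-α) / (1-α)))
      + 5 * (T * (-(R/2) ^ (k-α) / (k-α)))
      = T * (1/(1-α) + 5/(α-k)) * ((R/2) ^ (k-α)) := by
    have e : (R/2) ^ (k-1) * (T * ((R/2) ^ (1-α) / (1-α)))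
        = T * (((R/2) ^ (k-1) * (R/2) ^ (1-α)) / (1-α)) := by ring
    have hsw : 5/(α-k) = -(5/(k-α)) := by
      rw [show α - k = -(k-α) by ring, div_neg]
    rw [e, hpow, hsw]
    ring
  rw [key, hhalf]
  have : T * (1/(1-α) + 5/(α-k)) * (c2 * R ^ (k-α))
      = (T * (1/(1-α) + 5/(α-k)) * c2) * R ^ (k-α) := by ring
  rw [this]
  have hcoef : (0:ℝ) ≤ T * (1/(1-α) + 5/(α-k)) * c2 := by
    apply mul_nonneg (mul_nonneg hT0 _) hc2.le
    have := div_nonneg (by norm_num : (0:ℝ) ≤ 1) h1a.le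
    have := div_nonneg (by norm_num : (0:ℝ) ≤ 5) hak.le
    linarith
  nlinarith [hRk0]
end

section
/- Let d ∈ ℕ*, α ∈ (0,2), p ∈ (1,∞) with q = p/(p−1), let μ ∈ L^1(ℝ^d) be nonnegative and locally bounded, and let Ω ⊂ ℝ^d be a bounded measurable set with μ(Ω) := ∫_Ω μ > 0. Then for every measurable v : ℝ^d → ℝ with ∫_{ℝ^d} |v|^p μ < ∞ and ∫_{ℝ^d} v μ = 0: ∫_Ω |v|^p μ ≤ C_{PW} ∫_Ω D_p(v) μ + ε_Ω ‖v‖_{L^p_μ(Ω)}^{p−1} ‖v‖_{L^p_μ(Ω^c)}, where C_{PW} := diam(Ω)^{d+α} ‖μ‖_{L^∞(Ω)} / μ(Ω), ε_Ω := (μ(Ω^c)/μ(Ω))^{1/q}, ‖v‖_{L^p_μ(A)}^p := ∫_A |v|^p μ, and D_p(v)(x) := (1/2)∫_{ℝ^d} (v(y)−v(x))(v(y)^{p−1}−v(x)^{p−1}) / |y−x|^{d+α} dy. -/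
open MeasureTheory
open scoped ENNReal NNReal

lemma sgnPow_eq (a z : ℝ) (ha : a ≠ 0) :
    sgnPow a z = if 0 ≤ z then z ^ a else -((-z) ^ a) := by
  unfold sgnPow
  rcases lt_trichotomy z 0 with hz | hz | hz
  · rw [if_neg (not_le.2 hz), abs_of_neg hz]
    have : (-z) ^ (a - 1) * z = -((-z) ^ (a-1) * (-z)) := by ring
    rw [this, ← Real.rpow_add_one (by linarith : -z ≠ 0)]
    ring_nf
  · simp [hz, Real.zero_rpow ha]
  · rw [if_pos hz.le, abs_of_pos hz, ← Real.rpow_add_one hz.ne']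
    ring_nf

lemma sgnPow_mono {a : ℝ} (ha : 0 < a) : Monotone (sgnPow a) := by
  intro z w hzw
  rw [sgnPow_eq a z ha.ne', sgnPow_eq a w ha.ne']
  rcases le_or_gt 0 z with hz | hz
  · rw [if_pos hz, if_pos (hz.trans hzw)]
    exact Real.rpow_le_rpow hz hzw ha.le
  · rw [if_neg (not_le.2 hz)]
    rcases le_or_gt 0 w with hw | hw
    · rw [if_pos hw]
      have : 0 ≤ (-z) ^ a := Real.rpow_nonneg (by linarith) a
      have : 0 ≤ w ^ a := Real.rpow_nonneg hw a
      linarith [Real.rpow_nonneg (by linarith : (0:ℝ) ≤ -z) a]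
    · rw [if_neg (not_le.2 hw)]
      have : (-w) ^ a ≤ (-z) ^ a := Real.rpow_le_rpow (by linarith) (by linarith) ha.le
      linarith

lemma sgnPow_diff_nonneg {a : ℝ} (ha : 0 < a) (z w : ℝ) :
    0 ≤ (w - z) * (sgnPow a w - sgnPow a z) := by
  rcases le_total z w with h | h
  · exact mul_nonneg (by linarith) (by linarith [sgnPow_mono ha h])
  · nlinarith [sgnPow_mono ha h]

lemma mul_sgnPow {p : ℝ} (hp : 1 < p) (z : ℝ) : z * sgnPow (p - 1) z = |z| ^ p := by
  unfold sgnPow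
  rcases eq_or_ne z 0 with hz | hz
  · simp [hz, Real.zero_rpow (by linarith : p ≠ 0)]
  · have h0 : |z| ≠ 0 := abs_ne_zero.2 hz
    have : z * (|z| ^ (p - 1 - 1) * z) = |z| ^ (p-1-1) * (|z| * |z|) := by
      rw [abs_mul_abs_self]; ring
    rw [this, ← mul_assoc, ← Real.rpow_add_one h0, ← Real.rpow_add_one h0]
    norm_num

lemma abs_sgnPow (a z : ℝ) (ha : a ≠ 0) : |sgnPow a z| = |z| ^ a := by
  unfold sgnPow
  rcases eq_or_ne z 0 with hz | hz
  · simp [hz, Real.zero_rpow ha]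
  · have h0 : |z| ≠ 0 := abs_ne_zero.2 hz
    rw [abs_mul, abs_of_nonneg (Real.rpow_nonneg (abs_nonneg z) _),
      ← Real.rpow_add_one h0]
    norm_num


lemma holder_aux {X : Type*} [MeasurableSpace X] {ν : Measure X} {p q : ℝ}
    (hpq : Real.HolderConjugate p q) {f g : X → ℝ}
    (hf : AEMeasurable f ν) (hg : AEMeasurable g ν)
    (hf0 : 0 ≤ᵐ[ν] f) (hg0 : 0 ≤ᵐ[ν] g)
    (hfp : Integrable (fun x => f x ^ p) ν) (hgq : Integrable (fun x => g x ^ q) ν) :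
    ∫ x, f x * g x ∂ν ≤ (∫ x, f x ^ p ∂ν) ^ (1/p) * (∫ x, g x ^ q ∂ν) ^ (1/q) := by
  have hfp0 : 0 ≤ᵐ[ν] fun x => f x ^ p := hf0.mono fun x hx => Real.rpow_nonneg hx p
  have hgq0 : 0 ≤ᵐ[ν] fun x => g x ^ q := hg0.mono fun x hx => Real.rpow_nonneg hx q
  have hA0 : 0 ≤ ∫ x, f x ^ p ∂ν := integral_nonneg_of_ae hfp0
  have hB0 : 0 ≤ ∫ x, g x ^ q ∂ν := integral_nonneg_of_ae hgq0
  have hRHS0 : 0 ≤ (∫ x, f x ^ p ∂ν) ^ (1/p) * (∫ x, g x ^ q ∂ν) ^ (1/q) :=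
    mul_nonneg (Real.rpow_nonneg hA0 _) (Real.rpow_nonneg hB0 _)
  by_cases hfg : Integrable (fun x => f x * g x) ν
  · rw [← ENNReal.ofReal_le_ofReal_iff hRHS0]
    have hfg0 : 0 ≤ᵐ[ν] fun x => f x * g x := by
      filter_upwards [hf0, hg0] with x h1 h2; exact mul_nonneg h1 h2
    rw [ofReal_integral_eq_lintegral_ofReal hfg hfg0]
    have key := ENNReal.lintegral_mul_le_Lp_mul_Lq ν hpq
      (ENNReal.measurable_ofReal.comp_aemeasurable hf)
      (ENNReal.measurable_ofReal.comp_aemeasurable hg)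
    simp only [Function.comp_apply, Pi.mul_apply] at key
    have h1 : ∫⁻ x, ENNReal.ofReal (f x * g x) ∂ν
        = ∫⁻ x, ENNReal.ofReal (f x) * ENNReal.ofReal (g x) ∂ν := by
      refine lintegral_congr_ae ?_
      filter_upwards [hf0] with x h1
      simp [ENNReal.ofReal_mul h1]
    have h2 : ∫⁻ x, ENNReal.ofReal (f x) ^ p ∂ν = ENNReal.ofReal (∫ x, f x ^ p ∂ν) := by
      rw [ofReal_integral_eq_lintegral_ofReal hfp hfp0]
      refine lintegral_congr_ae ?_
      filter_upwards [hf0] with x hx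
      rw [← ENNReal.ofReal_rpow_of_nonneg hx hpq.nonneg]
    have h3 : ∫⁻ x, ENNReal.ofReal (g x) ^ q ∂ν = ENNReal.ofReal (∫ x, g x ^ q ∂ν) := by
      rw [ofReal_integral_eq_lintegral_ofReal hgq hgq0]
      refine lintegral_congr_ae ?_
      filter_upwards [hg0] with x hx
      rw [← ENNReal.ofReal_rpow_of_nonneg hx hpq.symm.nonneg]
    rw [h1]
    refine key.trans_eq ?_
    rw [h2, h3, ENNReal.ofReal_rpow_of_nonneg hA0 (one_div_nonneg.2 hpq.pos.le),
      ENNReal.ofReal_rpow_of_nonneg hB0 (one_div_nonneg.2 hpq.symm.pos.le),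
      ← ENNReal.ofReal_mul (Real.rpow_nonneg hA0 _)]
  · rw [integral_undef hfg]; exact hRHS0

lemma holder_mu {X : Type*} [MeasurableSpace X] {ν : Measure X} {p q : ℝ}
    (hpq : Real.HolderConjugate p q) (w μ : X → ℝ)
    (hw : AEMeasurable w ν) (hw0 : ∀ x, 0 ≤ w x)
    (hμa : AEMeasurable μ ν) (hμ0 : ∀ x, 0 ≤ μ x)
    (hμi : Integrable μ ν) (hwp : Integrable (fun x => w x ^ p * μ x) ν) :
    ∫ x, w x * μ x ∂ν ≤ (∫ x, w x ^ p * μ x ∂ν) ^ (1/p) * (∫ x, μ x ∂ν) ^ (1/q) := by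
  have hp0 : (0:ℝ) < p := hpq.pos
  have hq0 : (0:ℝ) < q := hpq.symm.pos
  set f : X → ℝ := fun x => w x * μ x ^ (1/p) with hfdef
  set g : X → ℝ := fun x => μ x ^ (1/q) with hgdef
  have hf : AEMeasurable f ν := hw.mul (hμa.pow aemeasurable_const)
  have hg : AEMeasurable g ν := hμa.pow aemeasurable_const
  have hfg : ∀ x, f x * g x = w x * μ x := by
    intro x
    simp only [hfdef, hgdef]
    rcases eq_or_lt_of_le (hμ0 x) with h | h
    · rw [← h, Real.zero_rpow (by positivity), Real.zero_rpow (by positivity)]; ring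
    · rw [mul_assoc, ← Real.rpow_add h]
      have hpq1 : 1/p + 1/q = 1 := by
        have := hpq.inv_add_inv_eq_one; rw [one_div, one_div]; linarith
      rw [hpq1, Real.rpow_one]
  have hfpp : ∀ x, f x ^ p = w x ^ p * μ x := by
    intro x
    simp only [hfdef]
    rw [Real.mul_rpow (hw0 x) (Real.rpow_nonneg (hμ0 x) _), ← Real.rpow_mul (hμ0 x),
      one_div, inv_mul_cancel₀ hp0.ne', Real.rpow_one]
  have hgq : ∀ x, g x ^ q = μ x := by
    intro x
    simp only [hgdef]
    rw [← Real.rpow_mul (hμ0 x), one_div, inv_mul_cancel₀ hq0.ne', Real.rpow_one]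
  have h := holder_aux hpq hf hg
    (ae_of_all _ fun x => mul_nonneg (hw0 x) (Real.rpow_nonneg (hμ0 x) _))
    (ae_of_all _ fun x => Real.rpow_nonneg (hμ0 x) _)
    (hwp.congr (ae_of_all _ fun x => (hfpp x).symm))
    (hμi.congr (ae_of_all _ fun x => (hgq x).symm))
  have e1 : ∫ x, f x * g x ∂ν = ∫ x, w x * μ x ∂ν :=
    integral_congr_ae (ae_of_all _ hfg)
  have e2 : ∫ x, f x ^ p ∂ν = ∫ x, w x ^ p * μ x ∂ν :=
    integral_congr_ae (ae_of_all _ hfpp)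
  have e3 : ∫ x, g x ^ q ∂ν = ∫ x, μ x ∂ν :=
    integral_congr_ae (ae_of_all _ hgq)
  rw [e1, e2, e3] at h
  exact h


set_option maxHeartbeats 1000000 in
theorem stmt16 (d : ℕ) (hd : 0 < d) (α p q : ℝ) (hα : 0 < α ∧ α < 2) (hp : 1 < p)
    (hq : q = p / (p - 1))
    (μ : EuclideanSpace ℝ (Fin d) → ℝ) (hμ0 : ∀ x, 0 ≤ μ x) (hμint : Integrable μ)
    (hμloc : ∀ K : Set (EuclideanSpace ℝ (Fin d)), Bornology.IsBounded K →
      MemLp μ ⊤ (volume.restrict K))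
    (Ω : Set (EuclideanSpace ℝ (Fin d))) (hΩmeas : MeasurableSet Ω)
    (hΩbdd : Bornology.IsBounded Ω) (hμΩ : 0 < ∫ x in Ω, μ x)
    (v : EuclideanSpace ℝ (Fin d) → ℝ) (hv : Measurable v)
    (hvp : Integrable (fun x => |v x| ^ p * μ x))
    (hvμ : Integrable (fun x => v x * μ x)) (hmean : ∫ x, v x * μ x = 0) :
    ENNReal.ofReal (∫ x in Ω, |v x| ^ p * μ x) ≤
      ENNReal.ofReal (Metric.diam Ω ^ ((d : ℝ) + α) *
          ((eLpNorm μ ⊤ (volume.restrict Ω)).toReal / ∫ y in Ω, μ y)) *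
        (∫⁻ x in Ω,
          (1 / 2) * (∫⁻ y : EuclideanSpace ℝ (Fin d),
            ENNReal.ofReal ((v y - v x) * (sgnPow (p - 1) (v y) - sgnPow (p - 1) (v x)) /
              ‖y - x‖ ^ ((d : ℝ) + α))) * ENNReal.ofReal (μ x)) +
      ENNReal.ofReal (((∫ y in Ωᶜ, μ y) / ∫ y in Ω, μ y) ^ (1 / q) *
        (((∫ x in Ω, |v x| ^ p * μ x) ^ (1 / p)) ^ (p - 1) *
          (∫ x in Ωᶜ, |v x| ^ p * μ x) ^ (1 / p))) := by
  obtain ⟨hα0, hα2⟩ := hα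
  have hp0 : (0:ℝ) < p := by linarith
  have hp1 : (0:ℝ) < p - 1 := by linarith
  have hpq : p.HolderConjugate q := (Real.holderConjugate_iff_eq_conjExponent hp).2 hq
  have hq0 : (0:ℝ) < q := hpq.symm.pos
  have hdα : (0:ℝ) ≤ (d:ℝ) + α := by positivity
  set φ : ℝ → ℝ := sgnPow (p - 1) with hφdef
  have hφm : Measurable fun x => φ (v x) := by
    simp only [hφdef, sgnPow]
    exact (hv.abs.pow measurable_const).mul hv
  have habsφ : ∀ z, |φ z| = |z| ^ (p - 1) := fun z => abs_sgnPow _ _ hp1.ne'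
  -- abbreviations
  set m := ∫ y in Ω, μ y with hm_def
  set mc := ∫ y in Ωᶜ, μ y with hmc_def
  set I := ∫ x in Ω, |v x| ^ p * μ x with hI_def
  set Ic := ∫ x in Ωᶜ, |v x| ^ p * μ x with hIc_def
  set N := (eLpNorm μ ⊤ (volume.restrict Ω)).toReal with hN_def
  set D := Metric.diam Ω with hD_def
  set C₀ := D ^ ((d:ℝ) + α) * N with hC₀_def
  have hm0 : 0 < m := hμΩ
  have hmc0 : 0 ≤ mc := integral_nonneg fun y => hμ0 y
  have hI0 : 0 ≤ I := integral_nonneg fun x => mul_nonneg (Real.rpow_nonneg (abs_nonneg _) _) (hμ0 x)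
  have hIc0 : 0 ≤ Ic := integral_nonneg fun x => mul_nonneg (Real.rpow_nonneg (abs_nonneg _) _) (hμ0 x)
  have hN0 : 0 ≤ N := ENNReal.toReal_nonneg
  have hD0 : 0 ≤ D := Metric.diam_nonneg
  have hC₀0 : 0 ≤ C₀ := mul_nonneg (Real.rpow_nonneg hD0 _) hN0
  have hμae : AEStronglyMeasurable μ volume := hμint.1
  -- integrability facts
  have i1 : Integrable μ (volume.restrict Ω) := hμint.restrict
  have i3 : Integrable (fun y => v y * μ y) (volume.restrict Ω) := hvμ.restrict
  have i4 : Integrable (fun y => |v y| ^ p * μ y) (volume.restrict Ω) := hvp.restrict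
  have iφglob : Integrable (fun y => φ (v y) * μ y) volume := by
    refine Integrable.mono' (hμint.add hvp) (hφm.aestronglyMeasurable.mul hμae) ?_
    filter_upwards with y
    simp only [Pi.add_apply]
    rw [norm_mul, Real.norm_eq_abs, Real.norm_eq_abs, habsφ (v y), abs_of_nonneg (hμ0 y)]
    have h1 : |v y| ^ (p-1) ≤ 1 + |v y| ^ p := by
      rcases le_total (|v y|) 1 with h | h
      · have h2 := Real.rpow_le_one (abs_nonneg _) h (le_of_lt hp1)
        have h3 : 0 ≤ |v y| ^ p := Real.rpow_nonneg (abs_nonneg _) _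
        linarith
      · have h2 := Real.rpow_le_rpow_of_exponent_le h (by linarith : p - 1 ≤ p)
        have h3 : (0:ℝ) ≤ 1 := zero_le_one
        linarith
    nlinarith [mul_nonneg (sub_nonneg.2 h1) (hμ0 y)]
  have i2 : Integrable (fun y => φ (v y) * μ y) (volume.restrict Ω) := iφglob.restrict
  -- mean-zero decomposition
  set a := ∫ y in Ω, v y * μ y with ha_def
  set b := ∫ y in Ω, φ (v y) * μ y with hb_def
  set c := ∫ y in Ωᶜ, v y * μ y with hc_def
  have hac : a = -c := by
    have h := integral_add_compl hΩmeas hvμ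
    rw [hmean] at h
    rw [ha_def, hc_def]; linarith
  -- inner integral identity
  have hptw : ∀ x y : EuclideanSpace ℝ (Fin d),
      (v y - v x) * (φ (v y) - φ (v x)) * μ y
      = (|v y| ^ p * μ y - v x * (φ (v y) * μ y) - φ (v x) * (v y * μ y))
        + (v x * φ (v x)) * μ y := by
    intro x y
    rw [hφdef, ← mul_sgnPow hp (v y)]; ring
  have iInner : ∀ x, Integrable
      (fun y => (v y - v x) * (φ (v y) - φ (v x)) * μ y) (volume.restrict Ω) := by
    intro x
    refine Integrable.congr ?_ (ae_of_all _ fun y => (hptw x y).symm)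
    exact ((i4.sub (i2.const_mul (v x))).sub (i3.const_mul (φ (v x)))).add
      (i1.const_mul (v x * φ (v x)))
  have hinner : ∀ x, (∫ y in Ω, (v y - v x) * (φ (v y) - φ (v x)) * μ y)
      = I - v x * b - φ (v x) * a + (v x * φ (v x)) * m := by
    intro x
    have hrw : (fun y => (v y - v x) * (φ (v y) - φ (v x)) * μ y)
        = fun y => (|v y| ^ p * μ y - v x * (φ (v y) * μ y) - φ (v x) * (v y * μ y))
          + (v x * φ (v x)) * μ y := funext fun y => hptw x y
    have ia1 : Integrable (fun y => |v y| ^ p * μ y - v x * (φ (v y) * μ y))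
        (volume.restrict Ω) := i4.sub (i2.const_mul (v x))
    have ia2 : Integrable
        (fun y => |v y| ^ p * μ y - v x * (φ (v y) * μ y) - φ (v x) * (v y * μ y))
        (volume.restrict Ω) := ia1.sub (i3.const_mul (φ (v x)))
    rw [hrw, integral_add ia2 (i1.const_mul (v x * φ (v x))),
      integral_sub ia1 (i3.const_mul (φ (v x))),
      integral_sub i4 (i2.const_mul (v x)),
      integral_const_mul, integral_const_mul, integral_const_mul]
  have hinner0 : ∀ x, 0 ≤ ∫ y in Ω, (v y - v x) * (φ (v y) - φ (v x)) * μ y := by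
    intro x
    refine integral_nonneg fun y => mul_nonneg ?_ (hμ0 y)
    exact sgnPow_diff_nonneg hp1 (v x) (v y)
  -- the symmetrized double integral
  set F : EuclideanSpace ℝ (Fin d) → ℝ :=
    fun x => (∫ y in Ω, (v y - v x) * (φ (v y) - φ (v x)) * μ y) * μ x with hF_def
  have hF0 : ∀ x, 0 ≤ F x := fun x => mul_nonneg (hinner0 x) (hμ0 x)
  have hFeq : F = fun x =>
      (I * μ x - b * (v x * μ x) - a * (φ (v x) * μ x)) + m * (|v x| ^ p * μ x) := by
    funext x
    rw [hF_def]
    simp only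
    rw [hinner x, hφdef, ← mul_sgnPow hp (v x)]
    ring
  have ic1 : Integrable (fun x => I * μ x - b * (v x * μ x)) (volume.restrict Ω) :=
    (i1.const_mul I).sub (i3.const_mul b)
  have ic2 : Integrable (fun x => I * μ x - b * (v x * μ x) - a * (φ (v x) * μ x))
      (volume.restrict Ω) := ic1.sub (i2.const_mul a)
  have hFint : Integrable F (volume.restrict Ω) := by
    rw [hFeq]
    exact ic2.add (i4.const_mul m)
  set H := ∫ x in Ω, F x with hH_def
  have hH0 : 0 ≤ H := integral_nonneg hF0
  have hHval : H = 2 * (m * I - a * b) := by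
    rw [hH_def, hFeq, integral_add ic2 (i4.const_mul m),
      integral_sub ic1 (i2.const_mul a),
      integral_sub (i1.const_mul I) (i3.const_mul b),
      integral_const_mul, integral_const_mul, integral_const_mul, integral_const_mul]
    rw [← hm_def, ← ha_def, ← hb_def, ← hI_def]
    ring
  -- Hoelder estimates
  set Etot := (mc / m) ^ (1/q) * ((I ^ (1/p)) ^ (p-1) * Ic ^ (1/p)) with hEtot_def
  have hpq1 : 1/p + 1/q = 1 := by
    have := hpq.inv_add_inv_eq_one; rw [one_div, one_div]; linarith
  have hb_est : |b| ≤ I ^ (1/q) * m ^ (1/p) := by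
    have h1 : |b| ≤ ∫ y in Ω, |v y| ^ (p-1) * μ y := by
      rw [hb_def, ← Real.norm_eq_abs]
      refine (norm_integral_le_integral_norm _).trans_eq
        (integral_congr_ae (ae_of_all _ fun y => ?_))
      show ‖φ (v y) * μ y‖ = |v y| ^ (p - 1) * μ y
      rw [norm_mul, Real.norm_eq_abs, Real.norm_eq_abs, habsφ (v y), abs_of_nonneg (hμ0 y)]
    have iwq : Integrable (fun y => (|v y| ^ (p-1)) ^ q * μ y) (volume.restrict Ω) :=
      i4.congr (ae_of_all _ fun y => by
        show |v y| ^ p * μ y = (|v y| ^ (p-1)) ^ q * μ y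
        rw [← Real.rpow_mul (abs_nonneg (v y)), hpq.sub_one_mul_conj])
    have h3 := holder_mu hpq.symm (fun y => |v y| ^ (p-1)) μ
      ((hv.abs.pow measurable_const).aemeasurable) (fun y => Real.rpow_nonneg (abs_nonneg _) _)
      i1.aemeasurable hμ0 i1 iwq
    have e : (∫ y in Ω, (|v y| ^ (p-1)) ^ q * μ y) = I :=
      integral_congr_ae (ae_of_all _ fun y => by
        show (|v y| ^ (p-1)) ^ q * μ y = |v y| ^ p * μ y
        rw [← Real.rpow_mul (abs_nonneg (v y)), hpq.sub_one_mul_conj])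
    rw [e] at h3
    exact h1.trans h3
  have hc_est : |c| ≤ Ic ^ (1/p) * mc ^ (1/q) := by
    have h1 : |c| ≤ ∫ y in Ωᶜ, |v y| * μ y := by
      rw [hc_def, ← Real.norm_eq_abs]
      refine (norm_integral_le_integral_norm _).trans_eq
        (integral_congr_ae (ae_of_all _ fun y => ?_))
      show ‖v y * μ y‖ = |v y| * μ y
      rw [norm_mul, Real.norm_eq_abs, Real.norm_eq_abs, abs_of_nonneg (hμ0 y)]
    have h3 := holder_mu (ν := volume.restrict Ωᶜ) hpq (fun y => |v y|) μ
      hv.abs.aemeasurable (fun y => abs_nonneg (v y))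
      (hμint.restrict (s := Ωᶜ)).aemeasurable hμ0 (hμint.restrict (s := Ωᶜ))
      (hvp.restrict (s := Ωᶜ))
    exact h1.trans h3
  have h4 : m ^ (1/p : ℝ) * m ^ (1/q : ℝ) = m := by
    rw [← Real.rpow_add hm0, hpq1, Real.rpow_one]
  have hIq' : (I ^ (1/p)) ^ (p-1) = I ^ (1/q) := by
    rw [← Real.rpow_mul hI0]
    congr 1
    rw [hq, one_div_div]
    field_simp
  have hab : a * b ≤ m * Etot := by
    have hqm_pos : (0:ℝ) < m ^ (1/q : ℝ) := Real.rpow_pos_of_pos hm0 _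
    calc a * b ≤ |a * b| := le_abs_self _
      _ = |c| * |b| := by rw [abs_mul, hac, abs_neg]
      _ ≤ (Ic ^ (1/p) * mc ^ (1/q)) * (I ^ (1/q) * m ^ (1/p)) :=
          mul_le_mul hc_est hb_est (abs_nonneg _)
            (mul_nonneg (Real.rpow_nonneg hIc0 _) (Real.rpow_nonneg hmc0 _))
      _ = m * Etot := by
          rw [hEtot_def, Real.div_rpow hmc0 hm0.le, hIq']
          field_simp
          linear_combination (Ic ^ (1/p) * mc ^ (1/q) * I ^ (1/q)) * h4
  have hreal : m * I ≤ 2⁻¹ * H + m * Etot := by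
    have h5 : m * I = 2⁻¹ * H + a * b := by rw [hHval]; ring
    linarith
  -- ENNReal estimates
  have hNtop : eLpNorm μ ⊤ (volume.restrict Ω) ≠ ⊤ := (hμloc Ω hΩbdd).2.ne
  have hNae : ∀ᵐ y ∂(volume.restrict Ω), μ y ≤ N := by
    filter_upwards [ae_le_eLpNormEssSup (f := μ) (μ := volume.restrict Ω)] with y hy
    have h2 : ((‖μ y‖₊ : ℝ≥0∞)).toReal ≤ N := by
      refine ENNReal.toReal_mono hNtop ?_
      rwa [eLpNorm_exponent_top]
    calc μ y ≤ |μ y| := le_abs_self _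
      _ = ((‖μ y‖₊ : ℝ≥0∞)).toReal := by
          simp [Real.norm_eq_abs]
      _ ≤ N := h2
  have hkey : ∀ x ∈ Ω, ∀ᵐ y ∂(volume.restrict Ω),
      ENNReal.ofReal ((v y - v x) * (φ (v y) - φ (v x)) * μ y)
        ≤ ENNReal.ofReal C₀ *
          ENNReal.ofReal ((v y - v x) * (φ (v y) - φ (v x)) / ‖y - x‖ ^ ((d:ℝ) + α)) := by
    intro x hx
    filter_upwards [hNae, ae_restrict_mem hΩmeas] with y hyN hyΩ
    rw [← ENNReal.ofReal_mul hC₀0]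
    apply ENNReal.ofReal_le_ofReal
    have hk0 : 0 ≤ (v y - v x) * (φ (v y) - φ (v x)) := sgnPow_diff_nonneg hp1 (v x) (v y)
    by_cases hyx : y = x
    · subst hyx
      simp [sub_self]
    · set k := (v y - v x) * (φ (v y) - φ (v x)) with hk_def
      have hne : y - x ≠ 0 := sub_ne_zero.2 hyx
      have hr0 : 0 < ‖y - x‖ := norm_pos_iff.2 hne
      have hrpos : 0 < ‖y - x‖ ^ ((d:ℝ) + α) := Real.rpow_pos_of_pos hr0 _
      have hrle : ‖y - x‖ ^ ((d:ℝ) + α) ≤ D ^ ((d:ℝ) + α) := by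
        refine Real.rpow_le_rpow (norm_nonneg _) ?_ hdα
        rw [← dist_eq_norm]
        exact Metric.dist_le_diam_of_mem hΩbdd hyΩ hx
      have hstep : k ≤ D ^ ((d:ℝ) + α) * (k / ‖y - x‖ ^ ((d:ℝ) + α)) := by
        rw [mul_div_assoc', le_div_iff₀ hrpos]
        calc k * ‖y - x‖ ^ ((d:ℝ) + α) ≤ k * D ^ ((d:ℝ) + α) :=
              mul_le_mul_of_nonneg_left hrle hk0
          _ = D ^ ((d:ℝ) + α) * k := by ring
      have hgdiv0 : 0 ≤ k / ‖y - x‖ ^ ((d:ℝ) + α) := div_nonneg hk0 hrpos.le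
      calc k * μ y ≤ k * N := mul_le_mul_of_nonneg_left hyN hk0
        _ ≤ (D ^ ((d:ℝ) + α) * (k / ‖y - x‖ ^ ((d:ℝ) + α))) * N :=
            mul_le_mul_of_nonneg_right hstep hN0
        _ = C₀ * (k / ‖y - x‖ ^ ((d:ℝ) + α)) := by rw [hC₀_def]; ring
  have hJx : ∀ x ∈ Ω, ENNReal.ofReal (F x) ≤ ENNReal.ofReal C₀ *
      ((∫⁻ y, ENNReal.ofReal ((v y - v x) * (φ (v y) - φ (v x)) / ‖y - x‖ ^ ((d:ℝ) + α)))
        * ENNReal.ofReal (μ x)) := by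
    intro x hx
    rw [hF_def]
    simp only
    rw [ENNReal.ofReal_mul (hinner0 x)]
    have h1 : ENNReal.ofReal (∫ y in Ω, (v y - v x) * (φ (v y) - φ (v x)) * μ y)
        = ∫⁻ y in Ω, ENNReal.ofReal ((v y - v x) * (φ (v y) - φ (v x)) * μ y) :=
      ofReal_integral_eq_lintegral_ofReal (iInner x)
        (ae_of_all _ fun y => mul_nonneg (sgnPow_diff_nonneg hp1 (v x) (v y)) (hμ0 y))
    have h2 : (∫⁻ y in Ω, ENNReal.ofReal ((v y - v x) * (φ (v y) - φ (v x)) * μ y))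
        ≤ ENNReal.ofReal C₀ *
          ∫⁻ y, ENNReal.ofReal ((v y - v x) * (φ (v y) - φ (v x)) / ‖y - x‖ ^ ((d:ℝ) + α)) := by
      calc (∫⁻ y in Ω, ENNReal.ofReal ((v y - v x) * (φ (v y) - φ (v x)) * μ y))
          ≤ ∫⁻ y in Ω, ENNReal.ofReal C₀ *
            ENNReal.ofReal ((v y - v x) * (φ (v y) - φ (v x)) / ‖y - x‖ ^ ((d:ℝ) + α)) :=
            lintegral_mono_ae (hkey x hx)
        _ = ENNReal.ofReal C₀ *
            ∫⁻ y in Ω, ENNReal.ofReal ((v y - v x) * (φ (v y) - φ (v x)) / ‖y - x‖ ^ ((d:ℝ) + α)) :=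
            lintegral_const_mul' _ _ ENNReal.ofReal_ne_top
        _ ≤ ENNReal.ofReal C₀ *
            ∫⁻ y, ENNReal.ofReal ((v y - v x) * (φ (v y) - φ (v x)) / ‖y - x‖ ^ ((d:ℝ) + α)) :=
            mul_le_mul_right (lintegral_mono' Measure.restrict_le_self le_rfl) _
    calc ENNReal.ofReal (∫ y in Ω, (v y - v x) * (φ (v y) - φ (v x)) * μ y)
          * ENNReal.ofReal (μ x)
        ≤ (ENNReal.ofReal C₀ *
          ∫⁻ y, ENNReal.ofReal ((v y - v x) * (φ (v y) - φ (v x)) / ‖y - x‖ ^ ((d:ℝ) + α)))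
          * ENNReal.ofReal (μ x) := by
          rw [h1]; exact mul_le_mul_left h2 _
      _ = ENNReal.ofReal C₀ *
          ((∫⁻ y, ENNReal.ofReal ((v y - v x) * (φ (v y) - φ (v x)) / ‖y - x‖ ^ ((d:ℝ) + α)))
            * ENNReal.ofReal (μ x)) := by rw [mul_assoc]
  have hMain : (∫⁻ x in Ω, ENNReal.ofReal (F x)) ≤ ENNReal.ofReal C₀ *
      ∫⁻ x in Ω,
        (∫⁻ y, ENNReal.ofReal ((v y - v x) * (φ (v y) - φ (v x)) / ‖y - x‖ ^ ((d:ℝ) + α)))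
          * ENNReal.ofReal (μ x) := by
    rw [← lintegral_const_mul' _ _ ENNReal.ofReal_ne_top]
    refine lintegral_mono_ae ?_
    filter_upwards [ae_restrict_mem hΩmeas] with x hx
    exact hJx x hx
  have hHof : ENNReal.ofReal H = ∫⁻ x in Ω, ENNReal.ofReal (F x) :=
    ofReal_integral_eq_lintegral_ofReal hFint (ae_of_all _ hF0)
  -- final assembly
  set K := ∫⁻ x in Ω,
      (∫⁻ y, ENNReal.ofReal ((v y - v x) * (φ (v y) - φ (v x)) / ‖y - x‖ ^ ((d:ℝ) + α)))
        * ENNReal.ofReal (μ x) with hK_def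
  have hhalf : (1/2 : ℝ≥0∞) ≠ ⊤ := by
    simp
  have hL : (∫⁻ x in Ω,
      (1/2 : ℝ≥0∞) * (∫⁻ y, ENNReal.ofReal
        ((v y - v x) * (φ (v y) - φ (v x)) / ‖y - x‖ ^ ((d:ℝ) + α)))
        * ENNReal.ofReal (μ x)) = (1/2 : ℝ≥0∞) * K := by
    rw [hK_def, ← lintegral_const_mul' _ _ hhalf]
    congr 1
    funext x
    ring
  have hm0' : ENNReal.ofReal m ≠ 0 := (ENNReal.ofReal_pos.2 hm0).ne'
  rw [← ENNReal.mul_le_mul_iff_right hm0' ENNReal.ofReal_ne_top]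
  have hhalfof : ENNReal.ofReal (2⁻¹ : ℝ) = (1/2 : ℝ≥0∞) := by
    rw [ENNReal.ofReal_inv_of_pos (by norm_num : (0:ℝ) < 2)]
    norm_num
  calc ENNReal.ofReal m * ENNReal.ofReal I = ENNReal.ofReal (m * I) :=
        (ENNReal.ofReal_mul hm0.le).symm
    _ ≤ ENNReal.ofReal (2⁻¹ * H + m * Etot) := ENNReal.ofReal_le_ofReal hreal
    _ ≤ ENNReal.ofReal (2⁻¹ * H) + ENNReal.ofReal (m * Etot) := ENNReal.ofReal_add_le
    _ ≤ (1/2 : ℝ≥0∞) * (ENNReal.ofReal C₀ * K) + ENNReal.ofReal (m * Etot) := by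
        refine add_le_add_left ?_ _
        rw [ENNReal.ofReal_mul (by norm_num : (0:ℝ) ≤ 2⁻¹), hhalfof]
        refine mul_le_mul_right ?_ _
        rw [hHof]
        exact hMain
    _ = ENNReal.ofReal m * (ENNReal.ofReal (D ^ ((d:ℝ) + α) * (N / m)) * ((1/2 : ℝ≥0∞) * K)
          + ENNReal.ofReal Etot) := by
        have hmDN : m * (D ^ ((d:ℝ) + α) * (N / m)) = C₀ := by
          rw [hC₀_def]; field_simp
        conv_rhs => rw [mul_add, ← mul_assoc, ← ENNReal.ofReal_mul hm0.le, hmDN,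
          ← ENNReal.ofReal_mul hm0.le]
        ring
    _ = ENNReal.ofReal m *
          (ENNReal.ofReal (D ^ ((d:ℝ) + α) * (N / m)) *
            (∫⁻ x in Ω,
              (1/2 : ℝ≥0∞) * (∫⁻ y, ENNReal.ofReal
                ((v y - v x) * (φ (v y) - φ (v x)) / ‖y - x‖ ^ ((d:ℝ) + α)))
                * ENNReal.ofReal (μ x))
            + ENNReal.ofReal Etot) := by
        rw [hL]
end

section
/- Let d ∈ ℕ*, α ∈ (0,2), r > 0, R > 0, and define the truncated kernel κ^c(z) := min( |z|^{−(d+α)}, r^{−(d+α)} ) for z ∈ ℝ^d. Then for every nonnegative u ∈ L^1(ℝ^d) and every x ∈ ℝ^d: (κ^c * u)(x) ≥ C ⟨x⟩^{−(d+α)} ∫_{B_R} u(y) dy, where B_R is the ball of radius R centered at the origin and C := ( √2 · max(r, R, 1) )^{−(d+α)}. -/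
open MeasureTheory

private theorem rpow_meas_aux (s : ℝ) : Measurable fun t : ℝ => t ^ s := by
  measurability

theorem stmt18 (d : ℕ) (hd : 0 < d) (α r R : ℝ) (hα : 0 < α ∧ α < 2)
    (hr : 0 < r) (hR : 0 < R)
    (u : EuclideanSpace ℝ (Fin d) → ℝ) (hu : Integrable u) (hu0 : ∀ y, 0 ≤ u y) :
    ∀ x : EuclideanSpace ℝ (Fin d),
      (Real.sqrt 2 * max r (max R 1)) ^ (-((d : ℝ) + α)) * jb x ^ (-((d : ℝ) + α)) *
          (∫ y in Metric.ball (0 : EuclideanSpace ℝ (Fin d)) R, u y) ≤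
        ∫ y : EuclideanSpace ℝ (Fin d),
          min (‖x - y‖ ^ (-((d : ℝ) + α))) (r ^ (-((d : ℝ) + α))) * u y := by
  intro x
  haveI : Nonempty (Fin d) := Fin.pos_iff_nonempty.mp hd
  set s : ℝ := (d : ℝ) + α with hs_def
  have hs : 0 < s := by
    have h0 : (0:ℝ) ≤ d := Nat.cast_nonneg d
    have := hα.1
    linarith
  set M : ℝ := max r (max R 1) with hM_def
  have hM1 : 1 ≤ M := le_max_of_le_right (le_max_right _ _)
  have hMr : r ≤ M := le_max_left _ _
  have hMR : R ≤ M := le_max_of_le_right (le_max_left _ _)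
  have hjb1 : 1 ≤ jb x := by
    rw [jb]
    have h := Real.sqrt_le_sqrt (show (1:ℝ) ≤ 1 + ‖x‖ ^ 2 by nlinarith [sq_nonneg ‖x‖])
    simpa using h
  have hjb0 : 0 < jb x := lt_of_lt_of_le one_pos hjb1
  set c : ℝ := (Real.sqrt 2 * M) ^ (-s) * jb x ^ (-s) with hc_def
  have hc0 : 0 ≤ c := by positivity
  -- key bound on the big constant
  have hsqrt2 : (1:ℝ) ≤ Real.sqrt 2 := by
    have h := Real.sqrt_le_sqrt (show (1:ℝ) ≤ 2 by norm_num)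
    simpa using h
  have hbig : 1 + ‖x‖ ≤ Real.sqrt 2 * jb x := by
    have h1 : Real.sqrt 2 * jb x = Real.sqrt (2 * (1 + ‖x‖ ^ 2)) := by
      rw [jb, ← Real.sqrt_mul (by norm_num)]
    have h2 : 1 + ‖x‖ ≤ Real.sqrt (2 * (1 + ‖x‖ ^ 2)) := by
      have := Real.sq_sqrt (show (0:ℝ) ≤ 2 * (1 + ‖x‖ ^ 2) by positivity)
      nlinarith [Real.sqrt_nonneg (2 * (1 + ‖x‖ ^ 2)), norm_nonneg x,
        sq_nonneg (1 - ‖x‖), sq_nonneg (Real.sqrt (2 * (1 + ‖x‖ ^ 2)) - (1 + ‖x‖))]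
    rw [h1]; exact h2
  have hcK : c = (Real.sqrt 2 * M * jb x) ^ (-s) := by
    rw [hc_def, ← Real.mul_rpow (by positivity) (le_of_lt hjb0)]
  -- pointwise bound on the ball, away from x
  have hpt : ∀ y, y ∈ Metric.ball (0 : EuclideanSpace ℝ (Fin d)) R → y ≠ x →
      c ≤ min (‖x - y‖ ^ (-s)) (r ^ (-s)) := by
    intro y hy hyx
    have hxy0 : 0 < ‖x - y‖ := by
      rw [norm_pos_iff, sub_ne_zero]; exact fun h => hyx h.symm
    have hyR : ‖y‖ < R := by simpa using hy
    rw [hcK]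
    refine le_min ?_ ?_
    · apply Real.rpow_le_rpow_of_nonpos hxy0 _ (by linarith)
      have hMbig : M * (1 + ‖x‖) ≤ M * (Real.sqrt 2 * jb x) :=
        mul_le_mul_of_nonneg_left hbig (by linarith)
      have hMx : ‖x‖ ≤ M * ‖x‖ := le_mul_of_one_le_left (norm_nonneg x) hM1
      calc ‖x - y‖ ≤ ‖x‖ + ‖y‖ := norm_sub_le _ _
        _ ≤ ‖x‖ + R := by linarith
        _ ≤ M * (1 + ‖x‖) := by nlinarith [norm_nonneg x]
        _ ≤ Real.sqrt 2 * M * jb x := by nlinarith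
    · apply Real.rpow_le_rpow_of_nonpos hr _ (by linarith)
      have hM0 : (0:ℝ) ≤ M := by linarith
      have : M * 1 ≤ Real.sqrt 2 * M * jb x :=
        mul_le_mul (by nlinarith : M ≤ Real.sqrt 2 * M) hjb1 zero_le_one (by positivity)
      linarith
  -- the integrand
  set f : EuclideanSpace ℝ (Fin d) → ℝ :=
    fun y => min (‖x - y‖ ^ (-s)) (r ^ (-s)) with hf_def
  have hrp : Measurable fun t : ℝ => t ^ (-s) := rpow_meas_aux (-s)
  have hf_meas : Measurable f := by
    have h1 : Measurable fun y : EuclideanSpace ℝ (Fin d) => ‖x - y‖ :=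
      (measurable_const.sub measurable_id).norm
    exact (hrp.comp h1).min measurable_const
  have hf_nonneg : ∀ y, 0 ≤ f y := fun y =>
    le_min (Real.rpow_nonneg (norm_nonneg _) _) (Real.rpow_nonneg hr.le _)
  have hfu_nonneg : ∀ y, 0 ≤ f y * u y := fun y => mul_nonneg (hf_nonneg y) (hu0 y)
  have hfu_int : Integrable (fun y => f y * u y) := by
    refine Integrable.mono' (hu.const_mul (r ^ (-s)))
      (hf_meas.aestronglyMeasurable.mul hu.1) ?_
    filter_upwards with y
    rw [Real.norm_of_nonneg (hfu_nonneg y)]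
    exact mul_le_mul_of_nonneg_right (min_le_right _ _) (hu0 y)
  -- a.e. bound on the restricted measure
  have hne : ∀ᵐ y : EuclideanSpace ℝ (Fin d), y ≠ x := by
    haveI : Nontrivial (EuclideanSpace ℝ (Fin d)) := by infer_instance
    refine ae_iff.mpr ?_
    simpa using measure_singleton x
  have hae : ∀ᵐ y ∂(volume.restrict (Metric.ball (0 : EuclideanSpace ℝ (Fin d)) R)),
      c * u y ≤ f y * u y := by
    rw [ae_restrict_iff' measurableSet_ball]
    filter_upwards [hne] with y hyx hy
    exact mul_le_mul_of_nonneg_right (hpt y hy hyx) (hu0 y)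
  calc (Real.sqrt 2 * M) ^ (-s) * jb x ^ (-s) *
          (∫ y in Metric.ball (0 : EuclideanSpace ℝ (Fin d)) R, u y)
      = ∫ y in Metric.ball (0 : EuclideanSpace ℝ (Fin d)) R, c * u y := by
        rw [integral_const_mul]
    _ ≤ ∫ y in Metric.ball (0 : EuclideanSpace ℝ (Fin d)) R, f y * u y := by
        refine integral_mono_ae ((hu.restrict).const_mul c) hfu_int.restrict hae
    _ ≤ ∫ y, f y * u y :=
        setIntegral_le_integral hfu_int (Filter.Eventually.of_forall hfu_nonneg)
end
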